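/- For every x ∈ ℝ^d, every real p ≥ 2, every u ∈ ℝ and every index k, writing f_p(x) = ‖x‖_p, one has |f_p(x + u e_k) - f_p(x)| ≤ p |u| ((|x_k| + |u|) / (‖x‖_p^p + |u|^p)^{1/p})^{p-1}. -/

import Mathlib

/-- The ℓ^p norm of a vector in ℝ^d, using real powers. -/
noncomputable def lpNorm {d : ℕ} (p : ℝ) (x : Fin d → ℝ) : ℝ :=
  (∑ k : Fin d, |x k| ^ p) ^ (1 / p)

private lemma aux_superadd {p A U : ℝ} (hp : 1 ≤ p) (hA : 0 ≤ A) (hU : 0 ≤ U) :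
    A ^ p + U ^ p ≤ (A + U) ^ p := by
  have hp0 : (0:ℝ) < p := lt_of_lt_of_le one_pos hp
  have hAU : 0 ≤ A + U := add_nonneg hA hU
  have hpm : 0 ≤ p - 1 := by linarith
  have hsplit : ∀ t : ℝ, 0 ≤ t → t ^ p = t ^ (p - 1) * t := by
    intro t ht
    have h : t ^ p = t ^ ((p-1) + 1) := by ring_nf
    rw [h, Real.rpow_add' ht (by linarith), Real.rpow_one]
  rw [hsplit A hA, hsplit U hU, hsplit (A+U) hAU]
  have h1 : A ^ (p-1) ≤ (A+U) ^ (p-1) :=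
    Real.rpow_le_rpow hA (by linarith) hpm
  have h2 : U ^ (p-1) ≤ (A+U) ^ (p-1) :=
    Real.rpow_le_rpow hU (by linarith) hpm
  calc A ^ (p-1) * A + U ^ (p-1) * U
      ≤ (A+U) ^ (p-1) * A + (A+U) ^ (p-1) * U :=
        add_le_add (mul_le_mul_of_nonneg_right h1 hA) (mul_le_mul_of_nonneg_right h2 hU)
    _ = (A+U) ^ (p-1) * (A+U) := by ring

private lemma aux_root_diff {p a b : ℝ} (hp : 1 ≤ p) (hb : 0 ≤ b) (hab : b ≤ a) :
    a ^ (1/p) - b ^ (1/p) ≤ (a - b) / a ^ ((p-1)/p) := by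
  have hp0 : (0:ℝ) < p := lt_of_lt_of_le one_pos hp
  have ha : 0 ≤ a := hb.trans hab
  rcases eq_or_lt_of_le ha with h0 | ha'
  · have hb0 : b = 0 := le_antisymm (hab.trans h0.ge) hb
    rw [← h0, hb0]
    simp [Real.zero_rpow (by positivity : (1:ℝ)/p ≠ 0)]
  · have hd : (0:ℝ) < a ^ ((p-1)/p) := Real.rpow_pos_of_pos ha' _
    rw [le_div_iff₀ hd]
    have key : b ≤ b ^ (1/p) * a ^ ((p-1)/p) := by
      have hb' : b = b ^ (1/p) * b ^ ((p-1)/p) := by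
        rw [← Real.rpow_add' hb (by
          field_simp; rw [show 1 + (p - 1) = p by ring, div_self hp0.ne']; exact one_ne_zero)]
        rw [show 1/p + (p-1)/p = 1 by field_simp; ring, Real.rpow_one]
      calc b = b ^ (1/p) * b ^ ((p-1)/p) := hb'
        _ ≤ b ^ (1/p) * a ^ ((p-1)/p) := mul_le_mul_of_nonneg_left
            (Real.rpow_le_rpow hb hab (div_nonneg (by linarith) hp0.le)) (Real.rpow_nonneg hb _)
    have ha'' : a ^ (1/p) * a ^ ((p-1)/p) = a := by
      rw [← Real.rpow_add ha', show 1/p + (p-1)/p = 1 by field_simp; ring, Real.rpow_one]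
    calc (a ^ (1/p) - b ^ (1/p)) * a ^ ((p-1)/p)
        = a - b ^ (1/p) * a ^ ((p-1)/p) := by rw [sub_mul, ha'']
      _ ≤ a - b := by linarith

private lemma aux_bernoulli {p m M : ℝ} (hp : 1 ≤ p) (hm : 0 ≤ m) (hmM : m ≤ M) :
    M ^ p - m ^ p ≤ p * M ^ (p - 1) * (M - m) := by
  have hp0 : (0:ℝ) < p := lt_of_lt_of_le one_pos hp
  have hM : 0 ≤ M := hm.trans hmM
  rcases eq_or_lt_of_le hM with h0 | hM'
  · have hm0 : m = 0 := le_antisymm (hmM.trans h0.ge) hm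
    rw [← h0, hm0]
    simp [Real.zero_rpow hp0.ne']
  · have hs : (-1:ℝ) ≤ m / M - 1 := by
      have h : (0:ℝ) ≤ m / M := by positivity
      linarith
    have hb := one_add_mul_self_le_rpow_one_add hs hp
    have hrw : (1 + (m / M - 1)) ^ p = m ^ p / M ^ p := by
      rw [show 1 + (m / M - 1) = m / M by ring, Real.div_rpow hm hM]
    rw [hrw] at hb
    have hMp : (0:ℝ) < M ^ p := Real.rpow_pos_of_pos hM' _
    have hmul := mul_le_mul_of_nonneg_right hb hMp.le
    rw [div_mul_cancel₀ _ hMp.ne'] at hmul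
    have hMp1 : M ^ p = M ^ (p-1) * M := by
      nth_rewrite 1 [show p = (p-1) + 1 by ring]
      rw [Real.rpow_add' hM (by linarith), Real.rpow_one]
    have hMdiv : M ^ p * (m / M) = M ^ (p-1) * m := by
      rw [hMp1]; field_simp
    nlinarith [hmul, hMdiv, hMp1]

private lemma aux_key {p c A b U : ℝ} (hp : 2 ≤ p) (hc : 0 ≤ c) (hA : 0 ≤ A) (hb : 0 ≤ b)
    (hU : 0 ≤ U) (hbA : |b - A| ≤ U) :
    |(c + b ^ p) ^ (1/p) - (c + A ^ p) ^ (1/p)| ≤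
      p * U * ((A + U) / (c + A ^ p + U ^ p) ^ (1/p)) ^ (p - 1) := by
  have hp1 : (1:ℝ) ≤ p := by linarith
  have hp0 : (0:ℝ) < p := by linarith
  have hpm : (0:ℝ) ≤ p - 1 := by linarith
  set M := max A b with hMdef
  set m := min A b with hmdef
  have hM : 0 ≤ M := hA.trans (le_max_left _ _)
  have hm : 0 ≤ m := le_min hA hb
  have hmM : m ≤ M := min_le_max
  have hbAU : b ≤ A + U := by
    have h := abs_le.mp hbA; linarith [h.2]
  have hMAU : M ≤ A + U := max_le (by linarith) hbAU
  have hMmU : M - m ≤ U := (max_sub_min_eq_abs' A b).trans_le (by rwa [abs_sub_comm] at hbA)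
  -- RHS is nonneg
  have hRHS0 : 0 ≤ p * U * ((A + U) / (c + A ^ p + U ^ p) ^ (1/p)) ^ (p - 1) := by
    have h : (0:ℝ) ≤ (A + U) / (c + A ^ p + U ^ p) ^ (1/p) := by positivity
    positivity
  -- trivial case M = 0
  rcases eq_or_lt_of_le hM with hM0 | hM0
  · have hA0 : A = 0 := le_antisymm ((le_max_left A b).trans hM0.ge) hA
    have hb0 : b = 0 := le_antisymm ((le_max_right A b).trans hM0.ge) hb
    rw [show b = A from hb0.trans hA0.symm, sub_self, abs_zero]
    exact hRHS0
  -- trivial case U = 0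
  rcases eq_or_lt_of_le hU with hU0 | hU0
  · have hbA' : b = A := by
      have h := abs_le.mp hbA
      apply le_antisymm <;> linarith [h.1, h.2]
    rw [hbA', sub_self, abs_zero]
    exact hRHS0
  -- main case
  have hSmax : (0:ℝ) < c + M ^ p := by
    have h : (0:ℝ) < M ^ p := Real.rpow_pos_of_pos hM0 _
    linarith
  have hD : (0:ℝ) < c + A ^ p + U ^ p := by
    have h1 : (0:ℝ) < U ^ p := Real.rpow_pos_of_pos hU0 _
    have h2 : (0:ℝ) ≤ A ^ p := Real.rpow_nonneg hA _
    linarith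
  have hdenS : (0:ℝ) < (c + M ^ p) ^ ((p-1)/p) := Real.rpow_pos_of_pos hSmax _
  have hdenD : (0:ℝ) < (c + A ^ p + U ^ p) ^ ((p-1)/p) := Real.rpow_pos_of_pos hD _
  -- monotone bounds
  have mono : ∀ s t : ℝ, 0 ≤ s → s ≤ t → (c + s ^ p) ^ (1/p) ≤ (c + t ^ p) ^ (1/p) := by
    intro s t hs hst
    apply Real.rpow_le_rpow (by positivity)
      (by have := Real.rpow_le_rpow hs hst hp0.le; linarith) (by positivity)
  -- main bound for max/min
  have main : (c + M ^ p) ^ (1/p) - (c + m ^ p) ^ (1/p) ≤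
      p * U * ((A + U) / (c + A ^ p + U ^ p) ^ (1/p)) ^ (p - 1) := by
    have h1 : (c + M ^ p) ^ (1/p) - (c + m ^ p) ^ (1/p) ≤
        ((c + M ^ p) - (c + m ^ p)) / (c + M ^ p) ^ ((p-1)/p) :=
      aux_root_diff hp1 (by positivity) (by
        have := Real.rpow_le_rpow hm hmM hp0.le; linarith)
    have h2 : (c + M ^ p) - (c + m ^ p) ≤ p * M ^ (p-1) * U := by
      have hber := aux_bernoulli hp1 hm hmM
      have hstep : p * M ^ (p-1) * (M - m) ≤ p * M ^ (p-1) * U :=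
        mul_le_mul_of_nonneg_left hMmU (by positivity)
      linarith
    have h3 : ((c + M ^ p) - (c + m ^ p)) / (c + M ^ p) ^ ((p-1)/p) ≤
        (p * M ^ (p-1) * U) / (c + M ^ p) ^ ((p-1)/p) := by gcongr
    -- cross inequality
    have cross : M ^ (p-1) * (c + A ^ p + U ^ p) ^ ((p-1)/p) ≤
        (A + U) ^ (p-1) * (c + M ^ p) ^ ((p-1)/p) := by
      have hcore : M ^ p * (c + A ^ p + U ^ p) ≤ (A + U) ^ p * (c + M ^ p) := by
        have e1 : M ^ p ≤ (A + U) ^ p := Real.rpow_le_rpow hM hMAU hp0.le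
        have e2 : A ^ p + U ^ p ≤ (A + U) ^ p := aux_superadd hp1 hA hU
        have hMp : (0:ℝ) ≤ M ^ p := Real.rpow_nonneg hM _
        nlinarith [Real.rpow_nonneg (add_nonneg hA hU) p]
      have expM : M ^ (p-1) = (M ^ p) ^ ((p-1)/p) := by
        rw [← Real.rpow_mul hM]
        congr 1; field_simp
      have expAU : (A + U) ^ (p-1) = ((A + U) ^ p) ^ ((p-1)/p) := by
        rw [← Real.rpow_mul (by positivity)]
        congr 1; field_simp
      rw [expM, expAU, ← Real.mul_rpow (Real.rpow_nonneg hM _) hD.le,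
        ← Real.mul_rpow (Real.rpow_nonneg (by positivity) _) hSmax.le]
      exact Real.rpow_le_rpow (by positivity) hcore (by positivity)
    have h4 : (p * M ^ (p-1) * U) / (c + M ^ p) ^ ((p-1)/p) ≤
        p * U * (A + U) ^ (p-1) / (c + A ^ p + U ^ p) ^ ((p-1)/p) := by
      rw [div_le_div_iff₀ hdenS hdenD]
      have hpU : (0:ℝ) ≤ p * U := by positivity
      calc p * M ^ (p-1) * U * (c + A ^ p + U ^ p) ^ ((p-1)/p)
          = (p * U) * (M ^ (p-1) * (c + A ^ p + U ^ p) ^ ((p-1)/p)) := by ring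
        _ ≤ (p * U) * ((A + U) ^ (p-1) * (c + M ^ p) ^ ((p-1)/p)) :=
            mul_le_mul_of_nonneg_left cross hpU
        _ = p * U * (A + U) ^ (p-1) * (c + M ^ p) ^ ((p-1)/p) := by ring
    have hrw : ((A + U) / (c + A ^ p + U ^ p) ^ (1/p)) ^ (p - 1) =
        (A + U) ^ (p-1) / (c + A ^ p + U ^ p) ^ ((p-1)/p) := by
      rw [Real.div_rpow (by positivity) (Real.rpow_nonneg hD.le _),
        ← Real.rpow_mul hD.le]
      congr 2
      field_simp
    rw [hrw, show p * U * ((A + U) ^ (p-1) / (c + A ^ p + U ^ p) ^ ((p-1)/p)) =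
      p * U * (A + U) ^ (p-1) / (c + A ^ p + U ^ p) ^ ((p-1)/p) by ring]
    linarith
  -- conclude via abs
  rw [abs_sub_le_iff]
  constructor
  · have l1 : (c + b ^ p) ^ (1/p) ≤ (c + M ^ p) ^ (1/p) := mono b M hb (le_max_right _ _)
    have l2 : (c + m ^ p) ^ (1/p) ≤ (c + A ^ p) ^ (1/p) := mono m A hm (min_le_left _ _)
    linarith
  · have l1 : (c + A ^ p) ^ (1/p) ≤ (c + M ^ p) ^ (1/p) := mono A M hA (le_max_left _ _)
    have l2 : (c + m ^ p) ^ (1/p) ≤ (c + b ^ p) ^ (1/p) := mono m b hm (min_le_right _ _)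
    linarith

theorem stmt_14 (d : ℕ) (x : Fin d → ℝ) (p : ℝ) (hp : 2 ≤ p) (u : ℝ) (k : Fin d) :
    |lpNorm p (x + Pi.single k u) - lpNorm p x| ≤
      p * |u| * ((|x k| + |u|) / ((lpNorm p x) ^ p + |u| ^ p) ^ (1 / p)) ^ (p - 1) := by
  have hp0 : (0:ℝ) < p := by linarith
  set y : Fin d → ℝ := x + Pi.single k u with hy
  set c : ℝ := ∑ i ∈ Finset.univ.erase k, |x i| ^ p with hcdef
  have hc : 0 ≤ c := Finset.sum_nonneg fun i _ => Real.rpow_nonneg (abs_nonneg _) _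
  have hS : ∑ i : Fin d, |x i| ^ p = c + |x k| ^ p := by
    rw [hcdef, Finset.sum_erase_add _ _ (Finset.mem_univ k)]
  have hT : ∑ i : Fin d, |y i| ^ p = c + |x k + u| ^ p := by
    rw [← Finset.sum_erase_add _ _ (Finset.mem_univ k)]
    congr 1
    · apply Finset.sum_congr rfl
      intro i hi
      have h : y i = x i := by
        simp [hy, Pi.single_eq_of_ne (Finset.ne_of_mem_erase hi)]
      rw [h]
    · have h : y k = x k + u := by simp [hy]
      rw [h]
  have hpow : (lpNorm p x) ^ p = c + |x k| ^ p := by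
    rw [lpNorm, hS, ← Real.rpow_mul (by positivity), one_div_mul_cancel hp0.ne',
      Real.rpow_one]
  rw [hpow, show lpNorm p (x + Pi.single k u) = lpNorm p y from rfl, lpNorm, lpNorm, hS, hT]
  exact aux_key hp hc (abs_nonneg _) (abs_nonneg _) (abs_nonneg _)
    (by simpa using abs_abs_sub_abs_le_abs_sub (x k + u) (x k))
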